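/- Assume e ∈ dcl(Σ) and fix a Lascar tuple b with e ∈ dcl(b). Let H = π_b^{-1}[Gal^c_L(Σ, e)] ≤ Aut_e(Σ), where Gal^c_L(Σ, e) is the closure of the trivial subgroup of Gal_L(Σ, e). Then for tuples c and d of realizations of Σ, c ≡^H d if and only if c ≡^KP_e d. -/

import Mathlib

/- Framework: relativized Lascar groups of a first-order theory over a
hyperimaginary, following "Relativized Galois groups of first order theories
over a hyperimaginary" by H. Lee and J. Lee. -/

open FirstOrder Cardinal Pointwise

universe u

namespace RelLascar

variable {L : FirstOrder.Language.{u, u}} {M : Type u} [L.Structure M]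

/-- The group of automorphisms of the monster model `M`. -/
instance : Group (M ≃[L] M) where
  mul f g := f.comp g
  one := FirstOrder.Language.Equiv.refl L M
  inv f := f.symm
  mul_assoc f g h := (FirstOrder.Language.Equiv.comp_assoc h g f).symm
  one_mul := FirstOrder.Language.Equiv.refl_comp
  mul_one := FirstOrder.Language.Equiv.comp_refl
  inv_mul_cancel := FirstOrder.Language.Equiv.symm_comp_self

/-- Automorphisms act on the monster model. -/
instance : MulAction (M ≃[L] M) M where
  smul f x := f x
  one_smul _ := rfl
  mul_smul _ _ _ := rfl

@[simp] theorem autSmul_def (f : M ≃[L] M) (x : M) : f • x = f x := rfl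

/-- The solution set in `M` of a set of formulas in variables `ι` with
parameters `prm : π → M`. -/
def SolSet {ι π : Type u} (p : Set (L.Formula (ι ⊕ π))) (prm : π → M) : Set (ι → M) :=
  {v | ∀ φ ∈ p, φ.Realize (Sum.elim v prm)}

/-- A set of `ι`-tuples is type-definable over the parameters `prm`. -/
def TypeDefinableOver {ι π : Type u} (prm : π → M) (X : Set (ι → M)) : Prop :=
  ∃ p : Set (L.Formula (ι ⊕ π)), X = SolSet p prm

/-- Two tuples have the same (complete) type over `∅`. -/
def SameTp {ι : Type u} (c d : ι → M) : Prop :=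
  ∀ φ : L.Formula ι, φ.Realize c ↔ φ.Realize d

/-- `M` is a monster model with degree of saturation and strong homogeneity `κ`:
`κ` is uncountable, tuples of size `< κ` with the same type are conjugate under an
automorphism, and every partial type in `< κ` variables over `< κ` parameters that
is finitely realized in `M` is realized in `M`.  ("Small" means of size `< κ`.) -/
def IsMonster (κ : Cardinal.{u}) (L : FirstOrder.Language.{u, u}) (M : Type u) [L.Structure M] : Prop :=
  ℵ₀ < κ ∧
  (∀ (ι : Type u) (c d : ι → M), #ι < κ → SameTp (L := L) (M := M) c d →
      ∃ f : M ≃[L] M, ∀ i, f (c i) = d i) ∧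
  (∀ (ι π : Type u) (prm : π → M) (p : Set (L.Formula (ι ⊕ π))), #ι < κ → #π < κ →
      (∀ q : Finset (L.Formula (ι ⊕ π)), ↑q ⊆ p →
        ∃ v : ι → M, ∀ φ ∈ (q : Set (L.Formula (ι ⊕ π))), φ.Realize (Sum.elim v prm)) →
      ∃ v : ι → M, v ∈ SolSet p prm)

variable (κ : Cardinal.{u})

section Hyperimaginary

/- The hyperimaginary `e = a_E`, where `E` is the `∅`-type-definable equivalence
relation defined by the set of formulas `pE` and `a : γ → M`. -/
variable {γ : Type u} (pE : Set (L.Formula (γ ⊕ γ))) (a : γ → M)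

/-- The relation defined by a set of formulas in variables `δ ⊕ δ` (with no
parameters); for `pE` this is the equivalence relation `E`. -/
def Frel {δ : Type u} (pF : Set (L.Formula (δ ⊕ δ))) (x y : δ → M) : Prop :=
  ∀ φ ∈ pF, φ.Realize (Sum.elim x y)

/-- The class of a tuple `x` under the relation defined by `pF`; for an
equivalence relation this is the hyperimaginary `x_F` (as a set of representatives). -/
def Fclass {δ : Type u} (pF : Set (L.Formula (δ ⊕ δ))) (x : δ → M) : Set (δ → M) :=
  {y | Frel pF x y}

/-- `Aut_e(𝔠)`: the subgroup of automorphisms fixing the hyperimaginary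
`e = a_E` setwise. -/
def AutE : Subgroup (M ≃[L] M) := MulAction.stabilizer (M ≃[L] M) (Fclass pE a)

/-- `Aut_e(𝔠)` as a group. -/
abbrev Ge := ↥(AutE pE a)

/-- The hyperimaginary `e` is definable over the tuple `t` (i.e. `e ∈ dcl(t)`):
every automorphism fixing `t` pointwise fixes `e`. -/
def eInDclTuple {ι : Type u} (t : ι → M) : Prop :=
  ∀ f : M ≃[L] M, (∀ i, f (t i) = t i) → f ∈ AutE pE a

/-- The set of elements of `Aut_e(𝔠)` fixing pointwise some small elementary
substructure (model) `N` with `e ∈ dcl(N)`. -/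
def modelFixers : Set (Ge pE a) :=
  {f | ∃ N : L.ElementarySubstructure M, #N < κ ∧
        (∀ g : M ≃[L] M, (∀ x ∈ N, g x = x) → g ∈ AutE pE a) ∧
        ∀ x ∈ N, (f : M ≃[L] M) x = x}

/-- `Autf_L(𝔠, e)`: the normal subgroup of `Aut_e(𝔠)` generated by the
pointwise stabilizers of small models `N` with `e ∈ dcl(N)`. -/
def AutfL : Subgroup (Ge pE a) := Subgroup.normalClosure (modelFixers κ pE a)

/-- `c ≡ᴸ_e d` : the tuples have the same Lascar strong type over `e`. -/
def LEq {ι : Type u} (c d : ι → M) : Prop := ∃ f ∈ AutfL κ pE a, f • c = d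

theorem LEq.refl {ι : Type u} (c : ι → M) : LEq κ pE a c c :=
  ⟨1, one_mem _, one_smul _ _⟩

theorem LEq.symm {ι : Type u} {c d : ι → M} (h : LEq κ pE a c d) : LEq κ pE a d c := by
  obtain ⟨f, hf, rfl⟩ := h
  exact ⟨f⁻¹, inv_mem hf, inv_smul_smul f c⟩

theorem LEq.trans {ι : Type u} {c d e : ι → M} (h1 : LEq κ pE a c d)
    (h2 : LEq κ pE a d e) : LEq κ pE a c e := by
  obtain ⟨f, hf, rfl⟩ := h1
  obtain ⟨g, hg, rfl⟩ := h2
  exact ⟨g * f, mul_mem hg hf, (mul_smul g f c).symm ▸ rfl⟩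

end Hyperimaginary

section Sigma

variable {γ : Type u} (pE : Set (L.Formula (γ ⊕ γ))) (a : γ → M)
variable {V β : Type u} {pS : Set (L.Formula (V ⊕ β))} {bp : β → M}

/-- The solution set `Σ(𝔠)` of the partial type `Σ` (given by formulas `pS` over
the parameters `bp`). -/
abbrev Sol (pS : Set (L.Formula (V ⊕ β))) (bp : β → M) : Set (V → M) := SolSet pS bp

/-- The type of realizations of `Σ`. -/
abbrev SolT (pS : Set (L.Formula (V ⊕ β))) (bp : β → M) := ↥(Sol pS bp)

variable (pS bp) in
/-- The partial type `Σ` is `e`-invariant. -/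
def SolInv : Prop := ∀ (g : Ge pE a) (v : V → M), v ∈ Sol pS bp → g • v ∈ Sol pS bp

/-- The restriction homomorphism `Aut_e(𝔠) → Perm(Σ(𝔠))`, `f ↦ f ↾ Σ(𝔠)`. -/
def resPerm (hInv : SolInv pE a pS bp) : Ge pE a →* Equiv.Perm (SolT pS bp) where
  toFun g :=
    { toFun := fun v => ⟨g • (v : V → M), hInv g v v.2⟩
      invFun := fun v => ⟨g⁻¹ • (v : V → M), hInv g⁻¹ v v.2⟩
      left_inv := fun v => Subtype.ext (inv_smul_smul g (v : V → M))
      right_inv := fun v => Subtype.ext (smul_inv_smul g (v : V → M)) }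
  map_one' := Equiv.ext fun v => Subtype.ext (one_smul (Ge pE a) (v : V → M))
  map_mul' g h := Equiv.ext fun v => Subtype.ext (mul_smul g h (v : V → M))

/-- `Aut_e(Σ) = {f ↾ Σ(𝔠) : f ∈ Aut_e(𝔠)}`, as a subgroup of the permutations of
`Σ(𝔠)`. -/
def AutES (hInv : SolInv pE a pS bp) : Subgroup (Equiv.Perm (SolT pS bp)) :=
  (resPerm pE a hInv).range

/-- `Aut_e(Σ)` as a group. -/
abbrev GS (hInv : SolInv pE a pS bp) := ↥(AutES pE a hInv)

/-- The restriction map `ξ : Aut_e(𝔠) → Aut_e(Σ)`. -/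
def toGS (hInv : SolInv pE a pS bp) : Ge pE a →* GS pE a hInv :=
  (resPerm pE a hInv).rangeRestrict

/-- A tuple of realizations of `Σ`, flattened to a tuple of elements of `M`. -/
def flat {ι : Type u} (c : ι → SolT pS bp) : ι × V → M := fun p => (c p.1 : V → M) p.2

theorem flat_toGS_smul (hInv : SolInv pE a pS bp) {ι : Type u} (g : Ge pE a)
    (c : ι → SolT pS bp) : flat ((toGS pE a hInv g) • c) = g • flat c := rfl

theorem flat_smul_of_res (hInv : SolInv pE a pS bp) {ι : Type u} {τ : GS pE a hInv}
    {g : Ge pE a} (hg : resPerm pE a hInv g = ↑τ) (c : ι → SolT pS bp) :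
    flat (τ • c) = g • flat c := by
  have : τ = toGS pE a hInv g := Subtype.ext hg.symm
  subst this
  rfl

/-- `Autf_L(Σ, e)`: the subgroup of `Aut_e(Σ)` consisting of those restricted
automorphisms `σ` such that every small tuple of realizations of `Σ` has the same
Lascar strong type over `e` as its image under `σ`. -/
def AutfLS (hInv : SolInv pE a pS bp) : Subgroup (GS pE a hInv) where
  carrier := {σ | ∀ (ι : Type u), #ι < κ → ∀ c : ι → SolT pS bp,
      LEq κ pE a (flat c) (flat (σ • c))}
  one_mem' := by
    intro ι _ c
    rw [one_smul]
    exact LEq.refl κ pE a _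
  mul_mem' := by
    intro σ τ hσ hτ ι hι c
    rw [mul_smul]
    exact LEq.trans κ pE a (hτ ι hι c) (hσ ι hι (τ • c))
  inv_mem' := by
    intro σ hσ ι hι c
    have h := hσ ι hι (σ⁻¹ • c)
    rw [smul_inv_smul] at h
    exact LEq.symm κ pE a h

theorem AutfLS_normal (hInv : SolInv pE a pS bp) : (AutfLS κ pE a hInv).Normal := by
  constructor
  intro σ hσ τ ι hι c
  obtain ⟨g, hg⟩ := τ.2
  have hginv : resPerm pE a hInv g⁻¹ = ↑τ⁻¹ := by
    rw [map_inv, hg]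
    rfl
  obtain ⟨f, hf, hfe⟩ := hσ ι hι (τ⁻¹ • c)
  refine ⟨g * f * g⁻¹, (Subgroup.normalClosure_normal).conj_mem f hf g, ?_⟩
  have h1 : flat (τ⁻¹ • c) = g⁻¹ • flat c := flat_smul_of_res pE a hInv hginv c
  have h2 : flat ((τ * σ * τ⁻¹) • c) = g • flat (σ • τ⁻¹ • c) := by
    rw [mul_smul, mul_smul]
    exact flat_smul_of_res pE a hInv hg _
  rw [h2, ← hfe, h1, ← mul_smul, ← mul_smul]

/-- The relativized Lascar group `Gal_L(Σ, e) = Aut_e(Σ) / Autf_L(Σ, e)`. -/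
def GalL (hInv : SolInv pE a pS bp) := GS pE a hInv ⧸ AutfLS κ pE a hInv

/-- The projection `π_b : Aut_e(Σ) → Gal_L(Σ, e)`. -/
def projb (hInv : SolInv pE a pS bp) : GS pE a hInv → GalL κ pE a hInv :=
  QuotientGroup.mk

/-- The projection `π_Σ : Aut_e(𝔠) → Gal_L(Σ, e)`. -/
def projS (hInv : SolInv pE a pS bp) : Ge pE a → GalL κ pE a hInv :=
  fun g => projb κ pE a hInv (toGS pE a hInv g)

/-- A Lascar tuple in `Σ` over `e`: a small tuple `b` of realizations of `Σ` such
that `Autf_L(Σ, e) = {σ ∈ Aut_e(Σ) : b ≡ᴸ_e σ(b)}`. -/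
def IsLascarTuple (hInv : SolInv pE a pS bp) {ιb : Type u} (b : ιb → SolT pS bp) : Prop :=
  #ιb < κ ∧ ∀ σ : GS pE a hInv,
    σ ∈ AutfLS κ pE a hInv ↔ LEq κ pE a (flat b) (flat (σ • b))

variable (pS bp) in
/-- `e ∈ dcl(Σ)`: there is a small tuple of realizations of `Σ` over which `e` is
definable. -/
def eInDclSigma : Prop :=
  ∃ (ι : Type u) (c : ι → SolT pS bp), #ι < κ ∧ eInDclTuple pE a (flat c)

/-- The complete type of the tuple `v` over the parameters `prm` (with both
indexed by `ι`): the set of formulas realized by `v` with parameters `prm`. -/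
def tpOver {ι : Type u} (prm v : ι → M) : Set (L.Formula (ι ⊕ ι)) :=
  {φ | φ.Realize (Sum.elim v prm)}

/-- The type space `S_b(b) = {tp(f(b)/b) : f ∈ Aut_e(𝔠)}` over a tuple `b` of
realizations of `Σ`. -/
def Sb {ιb : Type u} (b : ιb → SolT pS bp) :
    Set (Set (L.Formula ((ιb × V) ⊕ (ιb × V)))) :=
  Set.range fun g : Ge pE a => tpOver (flat b) (g • flat b)

/-- The logic topology on a set of types: the subspace topology induced from the
product topology on `Formula → Bool` via characteristic functions. -/
noncomputable def typeSetTop {F : Type u} (X : Set (Set F)) : TopologicalSpace ↥X :=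
  TopologicalSpace.induced
    (fun p (φ : F) => (p : Set F).boolIndicator φ) inferInstance

/-- The map `ν_b : S_b(b) → Gal_L(Σ, e)`, `tp(σ(b)/b) ↦ [σ]`. -/
noncomputable def nub (hInv : SolInv pE a pS bp) {ιb : Type u} (b : ιb → SolT pS bp) :
    ↥(Sb pE a b) → GalL κ pE a hInv :=
  fun p => projS κ pE a hInv (Set.mem_range.mp p.2).choose

/-- The topology `𝔱_b` on the relativized Lascar group `Gal_L(Σ, e)`: the quotient
topology induced by `ν_b` from the logic topology on `S_b(b)`. -/
noncomputable def galTopb (hInv : SolInv pE a pS bp) {ιb : Type u}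
    (b : ιb → SolT pS bp) : TopologicalSpace (GalL κ pE a hInv) :=
  (typeSetTop (Sb pE a b)).coinduced (nub κ pE a hInv b)

end Sigma

section GalT

variable {γ : Type u} (pE : Set (L.Formula (γ ⊕ γ))) (a : γ → M)

/-- The Lascar group `Gal_L(T, e) = Aut_e(𝔠) / Autf_L(𝔠, e)`. -/
def GalT := Ge pE a ⧸ AutfL κ pE a

/-- The projection `π : Aut_e(𝔠) → Gal_L(T, e)`. -/
def projT : Ge pE a → GalT κ pE a := QuotientGroup.mk

/-- The type space `S_N(N) = {tp(f(N)/N) : f ∈ Aut_e(𝔠)}` over a small model `N`. -/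
def SMod (N : L.ElementarySubstructure M) : Set (Set (L.Formula (↥N ⊕ ↥N))) :=
  Set.range fun g : Ge pE a =>
    tpOver (Subtype.val : ↥N → M) (g • (Subtype.val : ↥N → M))

/-- The map `ν : S_N(N) → Gal_L(T, e)`, `tp(f(N)/N) ↦ [f]`. -/
noncomputable def nuT (N : L.ElementarySubstructure M) :
    ↥(SMod pE a N) → GalT κ pE a :=
  fun p => projT κ pE a (Set.mem_range.mp p.2).choose

/-- The standard quotient topology on the Lascar group `Gal_L(T, e)` induced via
the type space over a small model `N` (with `e ∈ dcl(N)`). -/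
noncomputable def galTopT (N : L.ElementarySubstructure M) :
    TopologicalSpace (GalT κ pE a) :=
  (typeSetTop (SMod pE a N)).coinduced (nuT κ pE a N)

/-- `Autf_KP(𝔠, e)`: the preimage under `π` of the closure of the identity in
`Gal_L(T, e)`. -/
noncomputable def AutfKPset (N : L.ElementarySubstructure M) : Set (Ge pE a) :=
  projT κ pE a ⁻¹' (@closure _ (galTopT κ pE a N) {projT κ pE a 1})

/-- `Autf_S(𝔠, e)`: the preimage under `π` of the connected component of the
identity in `Gal_L(T, e)`. -/
noncomputable def AutfSset (N : L.ElementarySubstructure M) : Set (Ge pE a) :=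
  projT κ pE a ⁻¹' (@connectedComponent _ (galTopT κ pE a N) (projT κ pE a 1))

/-- `c ≡ᴷᴾ_e d` : the tuples have the same KP strong type over `e`. -/
def KPeq (N : L.ElementarySubstructure M) {ι : Type u} (c d : ι → M) : Prop :=
  ∃ f ∈ AutfKPset κ pE a N, f • c = d

/-- `c ≡ˢ_e d` : the tuples have the same Shelah strong type over `e`. -/
def Seq (N : L.ElementarySubstructure M) {ι : Type u} (c d : ι → M) : Prop :=
  ∃ f ∈ AutfSset κ pE a N, f • c = d

end GalT

section Relativized

variable {γ : Type u} (pE : Set (L.Formula (γ ⊕ γ))) (a : γ → M)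
variable {V β : Type u} {pS : Set (L.Formula (V ⊕ β))} {bp : β → M}

/-- `Autf_KP(Σ, e)`: the set of restricted automorphisms fixing the KP strong
type of every small tuple of realizations of `Σ`. -/
noncomputable def AutfKPSset (hInv : SolInv pE a pS bp) (N : L.ElementarySubstructure M) :
    Set (GS pE a hInv) :=
  {σ | ∀ (ι : Type u), #ι < κ → ∀ c : ι → SolT pS bp,
      KPeq κ pE a N (flat c) (flat (σ • c))}

/-- `Autf_S(Σ, e)`: the set of restricted automorphisms fixing the Shelah strong
type of every small tuple of realizations of `Σ`. -/
noncomputable def AutfSSset (hInv : SolInv pE a pS bp) (N : L.ElementarySubstructure M) :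
    Set (GS pE a hInv) :=
  {σ | ∀ (ι : Type u), #ι < κ → ∀ c : ι → SolT pS bp,
      Seq κ pE a N (flat c) (flat (σ • c))}

/-- The orbit under `Aut_e(𝔠)` of the hyperimaginary given by the class of `x`
under the relation defined by `pF` is small ("`x_F` is bounded over `e`"). -/
def BoundedClass {δ : Type u} (pF : Set (L.Formula (δ ⊕ δ))) (x : δ → M) : Prop :=
  #↥(Set.range fun g : Ge pE a => g • Fclass pF x) < κ

/-- The orbit under `Aut_e(𝔠)` of the hyperimaginary given by the class of `x` is
finite ("`x_F` is algebraic over `e`"). -/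
def FiniteClass {δ : Type u} (pF : Set (L.Formula (δ ⊕ δ))) (x : δ → M) : Prop :=
  (Set.range fun g : Ge pE a => g • Fclass pF x).Finite

/-- `f` fixes the hyperimaginary given by the class of `x` (setwise). -/
def FixesClass (f : Ge pE a) {δ : Type u} (pF : Set (L.Formula (δ ⊕ δ)))
    (x : δ → M) : Prop :=
  f • Fclass pF x = Fclass pF x

variable (pS bp) in
/-- `f` fixes every hyperimaginary that is bounded over `e` and has a
representative which is a small tuple of realizations of `Σ`, i.e. `f` fixes
`bdd(e) ∩ Σ` pointwise. -/
def fixesAllBddS (f : Ge pE a) : Prop :=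
  ∀ (ι : Type u) (pF : Set (L.Formula ((ι × V) ⊕ (ι × V)))) (c : ι → SolT pS bp),
    #ι < κ → Equivalence (Frel (M := M) pF) → BoundedClass κ pE a pF (flat c) →
    FixesClass pE a f pF (flat c)

variable (pS bp) in
/-- `f` fixes every hyperimaginary that is algebraic over `e` and has a
representative which is a small tuple of realizations of `Σ`, i.e. `f` fixes
`acl(e) ∩ Σ` pointwise. -/
def fixesAllAclS (f : Ge pE a) : Prop :=
  ∀ (ι : Type u) (pF : Set (L.Formula ((ι × V) ⊕ (ι × V)))) (c : ι → SolT pS bp),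
    #ι < κ → Equivalence (Frel (M := M) pF) → FiniteClass pE a pF (flat c) →
    FixesClass pE a f pF (flat c)

end Relativized


section More

variable {γ : Type u} (pE : Set (L.Formula (γ ⊕ γ))) (a : γ → M)
variable {V β : Type u} {pS : Set (L.Formula (V ⊕ β))} {bp : β → M}

theorem mem_AutfLS_iff (hInv : SolInv pE a pS bp) {σ : GS pE a hInv} :
    σ ∈ AutfLS κ pE a hInv ↔ ∀ (ι : Type u), #ι < κ → ∀ c : ι → SolT pS bp,
      LEq κ pE a (flat c) (flat (σ • c)) := Iff.rfl

theorem toGS_mem_autfLS (hInv : SolInv pE a pS bp) {f : Ge pE a}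
    (hf : f ∈ AutfL κ pE a) : toGS pE a hInv f ∈ AutfLS κ pE a hInv :=
  (mem_AutfLS_iff κ pE a hInv).mpr
    (fun ι _ c => ⟨f, hf, (flat_toGS_smul pE a hInv f c).symm⟩)

instance AutfL_normal : (AutfL κ pE a).Normal :=
  Subgroup.normalClosure_normal

/-- The group structure of the relativized Lascar group `Gal_L(Σ, e)`. -/
noncomputable def galLGroup (hInv : SolInv pE a pS bp) : Group (GalL κ pE a hInv) :=
  @QuotientGroup.Quotient.group _ _ (AutfLS κ pE a hInv) (AutfLS_normal κ pE a hInv)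

/-- The natural projection `ξ_L : Gal_L(T, e) → Gal_L(Σ, e)`. -/
noncomputable def xiL (hInv : SolInv pE a pS bp) : GalT κ pE a → GalL κ pE a hInv :=
  haveI := AutfLS_normal κ pE a hInv
  ⇑(QuotientGroup.map (AutfL κ pE a) (AutfLS κ pE a hInv) (toGS pE a hInv)
    (fun _ hf => Subgroup.mem_comap.mpr (toGS_mem_autfLS κ pE a hInv hf)))

/-- The orbit equivalence relation `≡ᴴ` of a set `H` of restricted automorphisms,
on tuples of realizations of `Σ`. -/
def orbEq {hInv : SolInv pE a pS bp} (H : Set (GS pE a hInv)) {ι : Type u}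
    (c d : ι → SolT pS bp) : Prop :=
  ∃ h ∈ H, h • c = d

end More


section Aux

variable {γ : Type u} (pE : Set (L.Formula (γ ⊕ γ))) (a : γ → M)
variable {V β : Type u} {pS : Set (L.Formula (V ⊕ β))} {bp : β → M}

/-! ### Basic helper lemmas -/

theorem flat_inj {ι : Type u} {c d : ι → SolT pS bp} (h : flat c = flat d) : c = d := by
  funext i
  exact Subtype.ext (funext fun v => congrFun h (i, v))

theorem ge_smul_apply (g : Ge pE a) {ι : Type u} (v : ι → M) (i : ι) :
    (g • v) i = (g : M ≃[L] M) (v i) := rfl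

theorem mem_tpOver {ι : Type u} {prm v : ι → M} {φ : L.Formula (ι ⊕ ι)} :
    φ ∈ tpOver prm v ↔ φ.Realize (Sum.elim v prm) := Iff.rfl

theorem boolIndicator_congr {F : Type u} {s t : Set F} {x y : F} (h : x ∈ s ↔ y ∈ t) :
    s.boolIndicator x = t.boolIndicator y := by
  by_cases hx : x ∈ s
  · rw [(Set.mem_iff_boolIndicator s x).mp hx, (Set.mem_iff_boolIndicator t y).mp (h.mp hx)]
  · rw [(Set.notMem_iff_boolIndicator s x).mp hx,
      (Set.notMem_iff_boolIndicator t y).mp (fun hy => hx (h.mpr hy))]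

theorem sum_lt_kappa (hκ : ℵ₀ < κ) {α β' : Type u} (hα : #α < κ) (hβ : #β' < κ) :
    #(α ⊕ β') < κ := by
  rw [Cardinal.mk_sum, Cardinal.lift_id, Cardinal.lift_id]
  exact Cardinal.add_lt_of_lt hκ.le hα hβ

theorem prod_lt_kappa (hκ : ℵ₀ < κ) {α β' : Type u} (hα : #α < κ) (hβ : #β' < κ) :
    #(α × β') < κ := by
  rw [Cardinal.mk_prod, Cardinal.lift_id, Cardinal.lift_id]
  exact Cardinal.mul_lt_of_lt hκ.le hα hβ

/-! ### The topology on type spaces -/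

/-- The indicator embedding used to define `typeSetTop`. -/
noncomputable def eps {F : Type u} (X : Set (Set F)) : ↥X → (F → Bool) :=
  fun p (φ : F) => (p : Set F).boolIndicator φ

theorem eps_inj {F : Type u} (X : Set (Set F)) : Function.Injective (eps X) := by
  intro p q h
  refine Subtype.ext (Set.ext fun x => ?_)
  have hx := congrFun h x
  simp only [eps] at hx
  rw [Set.mem_iff_boolIndicator, Set.mem_iff_boolIndicator, hx]

theorem isInducing_eps {F : Type u} (X : Set (Set F)) :
    @Topology.IsInducing _ _ (typeSetTop X) _ (eps X) :=
  letI := typeSetTop X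
  ⟨rfl⟩

theorem t2_typeSetTop {F : Type u} (X : Set (Set F)) : @T2Space _ (typeSetTop X) :=
  letI := typeSetTop X
  Topology.IsEmbedding.t2Space ⟨isInducing_eps X, eps_inj X⟩

theorem continuous_eps {F : Type u} (X : Set (Set F)) :
    @Continuous _ _ (typeSetTop X) _ (eps X) :=
  letI := typeSetTop X
  continuous_induced_dom

/-! ### Same projection from equal types -/

/-- If two elements of `Aut_e(𝔠)` move the tuple `prm` to tuples with the same
type over `prm`, then they have the same image in a quotient `G' ⧸ S` along a
homomorphism `θ`, provided pointwise fixers of `prm` land in `S`. -/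
theorem proj_eq_of_tpOver_eq (hM : IsMonster κ L M) {ι : Type u} {prm : ι → M}
    (hι : #ι < κ) {G' : Type u} [Group G'] (θ : Ge pE a →* G') (S : Subgroup G')
    [hS : S.Normal]
    (hfix : ∀ h : M ≃[L] M, (∀ i, h (prm i) = prm i) →
      ∃ hh : h ∈ AutE pE a, θ ⟨h, hh⟩ ∈ S)
    {f g : Ge pE a} (h : tpOver (L := L) prm (f • prm) = tpOver prm (g • prm)) :
    (QuotientGroup.mk (θ f) : G' ⧸ S) = QuotientGroup.mk (θ g) := by
  have hst : SameTp (L := L) (Sum.elim (f • prm) prm) (Sum.elim (g • prm) prm) := by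
    intro φ
    constructor
    · intro hφ; exact mem_tpOver.mp (h ▸ (mem_tpOver.mpr hφ))
    · intro hφ; exact mem_tpOver.mp (h.symm ▸ (mem_tpOver.mpr hφ))
  obtain ⟨h₀, hh₀⟩ := hM.2.1 (ι ⊕ ι) _ _ (sum_lt_kappa κ hM.1 hι hι) hst
  have hfixN : ∀ i, h₀ (prm i) = prm i := fun i => hh₀ (Sum.inr i)
  have hmove : ∀ i, h₀ ((f : M ≃[L] M) (prm i)) = (g : M ≃[L] M) (prm i) :=
    fun i => hh₀ (Sum.inl i)
  obtain ⟨hmem₀, hθ₀⟩ := hfix h₀ hfixN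
  set H₀ : Ge pE a := ⟨h₀, hmem₀⟩ with hH₀
  set z : Ge pE a := g⁻¹ * H₀ * f with hz
  have hzfix : ∀ i, (z : M ≃[L] M) (prm i) = prm i := by
    intro i
    show ((g⁻¹ : Ge pE a) : M ≃[L] M) ((H₀ : M ≃[L] M) ((f : M ≃[L] M) (prm i))) = prm i
    rw [hmove i]
    show ((g : M ≃[L] M)⁻¹) _ = _
    exact (g : M ≃[L] M).symm_apply_apply _
  obtain ⟨hmemz, hθz⟩ := hfix (z : M ≃[L] M) hzfix
  have hzz : (⟨(z : M ≃[L] M), hmemz⟩ : Ge pE a) = z := Subtype.ext rfl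
  rw [hzz] at hθz
  have key : g * z = H₀ * f := by rw [hz]; group
  calc (QuotientGroup.mk (θ f) : G' ⧸ S)
      = QuotientGroup.mk (θ f * ((θ f)⁻¹ * θ H₀ * θ f)) := by
        rw [QuotientGroup.mk_mul_of_mem]
        have := hS.conj_mem _ hθ₀ (θ f)⁻¹
        rwa [inv_inv] at this
    _ = QuotientGroup.mk (θ H₀ * θ f) := by
        congr 1
        group
    _ = QuotientGroup.mk (θ (H₀ * f)) := by rw [map_mul]
    _ = QuotientGroup.mk (θ (g * z)) := by rw [key]
    _ = QuotientGroup.mk (θ g * θ z) := by rw [map_mul]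
    _ = QuotientGroup.mk (θ g) := QuotientGroup.mk_mul_of_mem _ hθz

/-! ### Well-definedness of `ν` maps -/

theorem projT_eq_of_tpOver_eq (hM : IsMonster κ L M) (N : L.ElementarySubstructure M)
    (hN : #N < κ) (hNdcl : ∀ g : M ≃[L] M, (∀ x ∈ N, g x = x) → g ∈ AutE pE a)
    {f g : Ge pE a}
    (h : tpOver (L := L) (Subtype.val : ↥N → M) (f • (Subtype.val : ↥N → M)) =
      tpOver (Subtype.val : ↥N → M) (g • (Subtype.val : ↥N → M))) :
    projT κ pE a f = projT κ pE a g := by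
  refine proj_eq_of_tpOver_eq κ pE a hM hN (MonoidHom.id (Ge pE a)) (AutfL κ pE a) ?_ h
  intro h₀ hfix0
  have hmem : h₀ ∈ AutE pE a := hNdcl h₀ (fun x hx => hfix0 ⟨x, hx⟩)
  refine ⟨hmem, Subgroup.subset_normalClosure ?_⟩
  exact ⟨N, hN, hNdcl, fun x hx => hfix0 ⟨x, hx⟩⟩

theorem projS_eq_of_tpOver_eq (hM : IsMonster κ L M) (hV : #V < κ)
    (hInv : SolInv pE a pS bp) {ιb : Type u} (b : ιb → SolT pS bp)
    (hb : IsLascarTuple κ pE a hInv b) (hbdcl : eInDclTuple pE a (flat b))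
    {f g : Ge pE a}
    (h : tpOver (L := L) (flat b) (f • flat b) = tpOver (flat b) (g • flat b)) :
    projS κ pE a hInv f = projS κ pE a hInv g := by
  haveI := AutfLS_normal κ pE a hInv
  have hsize : #(ιb × V) < κ := prod_lt_kappa κ hM.1 hb.1 hV
  exact proj_eq_of_tpOver_eq κ pE a hM hsize (toGS pE a hInv) (AutfLS κ pE a hInv)
    (fun h₀ hfix0 => by
      have hmem : h₀ ∈ AutE pE a := hbdcl h₀ hfix0
      refine ⟨hmem, (hb.2 _).mpr ?_⟩
      have heq : flat ((toGS pE a hInv ⟨h₀, hmem⟩) • b) = flat b := by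
        rw [flat_toGS_smul]
        exact funext fun i => hfix0 i
      rw [heq]
      exact LEq.refl κ pE a _) h

theorem nuT_eq (hM : IsMonster κ L M) (N : L.ElementarySubstructure M)
    (hN : #N < κ) (hNdcl : ∀ g : M ≃[L] M, (∀ x ∈ N, g x = x) → g ∈ AutE pE a)
    (p : ↥(SMod pE a N)) (f : Ge pE a)
    (hp : (p : Set _) = tpOver (L := L) (Subtype.val : ↥N → M) (f • (Subtype.val : ↥N → M))) :
    nuT κ pE a N p = projT κ pE a f := by
  have hc := (Set.mem_range.mp p.2).choose_spec
  exact projT_eq_of_tpOver_eq κ pE a hM N hN hNdcl (hc.trans hp)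

theorem nub_eq (hM : IsMonster κ L M) (hV : #V < κ) (hInv : SolInv pE a pS bp)
    {ιb : Type u} (b : ιb → SolT pS bp)
    (hb : IsLascarTuple κ pE a hInv b) (hbdcl : eInDclTuple pE a (flat b))
    (p : ↥(Sb pE a b)) (f : Ge pE a)
    (hp : (p : Set _) = tpOver (L := L) (flat b) (f • flat b)) :
    nub κ pE a hInv b p = projS κ pE a hInv f := by
  have hc := (Set.mem_range.mp p.2).choose_spec
  exact projS_eq_of_tpOver_eq κ pE a hM hV hInv b hb hbdcl (hc.trans hp)

theorem xiL_projT (hInv : SolInv pE a pS bp) (f : Ge pE a) :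
    xiL κ pE a hInv (projT κ pE a f) = projS κ pE a hInv f := rfl

/-! ### Restriction maps between type spaces -/

theorem rmap_set_eq {ι₁ ι₂ : Type u} (prm₁ : ι₁ → M) (prm₂ : ι₂ → M) (j : ι₂ → ι₁)
    (hj : prm₁ ∘ j = prm₂) (g : Ge pE a) :
    {φ : L.Formula (ι₂ ⊕ ι₂) | φ.relabel (Sum.map j j) ∈ tpOver prm₁ (g • prm₁)} =
      tpOver prm₂ (g • prm₂) := by
  ext φ
  simp only [Set.mem_setOf_eq, mem_tpOver, Language.Formula.realize_relabel]
  apply iff_of_eq; congr 1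
  funext x
  cases x with
  | inl y =>
    show (g • prm₁) (j y) = (g • prm₂) y
    rw [ge_smul_apply, ge_smul_apply]
    exact congrArg _ (congrFun hj y)
  | inr y =>
    show prm₁ (j y) = prm₂ y
    exact congrFun hj y

noncomputable def rmap {ι₁ ι₂ : Type u} (prm₁ : ι₁ → M) (prm₂ : ι₂ → M) (j : ι₂ → ι₁)
    (hj : prm₁ ∘ j = prm₂) :
    ↥(Set.range fun g : Ge pE a => tpOver (L := L) prm₁ (g • prm₁)) →
    ↥(Set.range fun g : Ge pE a => tpOver (L := L) prm₂ (g • prm₂)) :=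
  fun P => ⟨{φ | φ.relabel (Sum.map j j) ∈ (P : Set _)}, by
    obtain ⟨g, hg⟩ := P.2
    exact ⟨g, by rw [← hg]; exact (rmap_set_eq pE a prm₁ prm₂ j hj g).symm⟩⟩

theorem rmap_val {ι₁ ι₂ : Type u} (prm₁ : ι₁ → M) (prm₂ : ι₂ → M) (j : ι₂ → ι₁)
    (hj : prm₁ ∘ j = prm₂)
    (P : ↥(Set.range fun g : Ge pE a => tpOver (L := L) prm₁ (g • prm₁))) (g : Ge pE a)
    (hP : (P : Set _) = tpOver (L := L) prm₁ (g • prm₁)) :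
    (rmap pE a prm₁ prm₂ j hj P : Set _) = tpOver (L := L) prm₂ (g • prm₂) := by
  have hh : (rmap pE a prm₁ prm₂ j hj P : Set _) =
      {φ : L.Formula (ι₂ ⊕ ι₂) | φ.relabel (Sum.map j j) ∈ (P : Set (L.Formula (ι₁ ⊕ ι₁)))} := rfl
  rw [hh, hP]
  exact rmap_set_eq pE a prm₁ prm₂ j hj g

theorem rmap_cont {ι₁ ι₂ : Type u} (prm₁ : ι₁ → M) (prm₂ : ι₂ → M) (j : ι₂ → ι₁)
    (hj : prm₁ ∘ j = prm₂) :
    @Continuous _ _ (typeSetTop (Set.range fun g : Ge pE a => tpOver (L := L) prm₁ (g • prm₁)))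
      (typeSetTop (Set.range fun g : Ge pE a => tpOver (L := L) prm₂ (g • prm₂)))
      (rmap pE a prm₁ prm₂ j hj) := by
  letI := typeSetTop (Set.range fun g : Ge pE a => tpOver (L := L) prm₁ (g • prm₁))
  letI := typeSetTop (Set.range fun g : Ge pE a => tpOver (L := L) prm₂ (g • prm₂))
  refine continuous_induced_rng.mpr (continuous_pi fun φ => ?_)
  have heq : (fun P => ((rmap pE a prm₁ prm₂ j hj P : Set _)).boolIndicator φ)
      = fun P : ↥(Set.range fun g : Ge pE a => tpOver (L := L) prm₁ (g • prm₁)) =>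
        ((P : Set _)).boolIndicator (φ.relabel (Sum.map j j)) := by
    funext P
    exact boolIndicator_congr Iff.rfl
  show Continuous fun P => ((rmap pE a prm₁ prm₂ j hj P : Set _)).boolIndicator φ
  rw [heq]
  exact (continuous_apply (φ.relabel (Sum.map j j))).comp (continuous_eps _)

/-! ### The action of automorphisms on classes -/

theorem aut_smul_Fclass {δ : Type u} (pF : Set (L.Formula (δ ⊕ δ))) (x : δ → M)
    (f : M ≃[L] M) :
    f • Fclass pF x = Fclass pF (fun t => f (x t)) := by
  ext y
  rw [Set.mem_smul_set_iff_inv_smul_mem]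
  show Frel pF x (f⁻¹ • y) ↔ Frel pF (fun t => f (x t)) y
  have hkey : ∀ φ : L.Formula (δ ⊕ δ),
      φ.Realize (Sum.elim x (f⁻¹ • y)) ↔ φ.Realize (Sum.elim (fun t => f (x t)) y) := by
    intro φ
    rw [← Language.StrongHomClass.realize_formula (L := L) f φ (v := Sum.elim x (f⁻¹ • y))]
    apply iff_of_eq; congr 1
    funext s
    cases s with
    | inl t => rfl
    | inr t =>
      show f ((f⁻¹ • y) t) = y t
      show f (f.symm (y t)) = y t
      exact Language.Equiv.apply_symm_apply f (y t)
  exact ⟨fun h φ hφ => (hkey φ).mp (h φ hφ), fun h φ hφ => (hkey φ).mpr (h φ hφ)⟩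

/-! ### Compactness of the master type space -/

theorem isClosed_range_eps_master (hM : IsMonster κ L M)
    (hE : Equivalence (Frel (M := M) pE)) {ι : Type u} {prm : ι → M}
    (hι : #ι < κ) (jγ : γ → ι) (hjγ : prm ∘ jγ = a) :
    IsClosed (Set.range (eps (Set.range fun g : Ge pE a => tpOver (L := L) prm (g • prm)))) := by
  set X := Set.range fun g : Ge pE a => tpOver (L := L) prm (g • prm) with hX
  classical
  refine isClosed_of_closure_subset ?_
  intro χ hχ
  have approx : ∀ s : Finset (L.Formula (ι ⊕ ι)), ∃ g : Ge pE a,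
      ∀ φ ∈ s, χ φ = (tpOver (L := L) prm (g • prm)).boolIndicator φ := by
    intro s
    have hU : IsOpen {x : L.Formula (ι ⊕ ι) → Bool | ∀ φ ∈ s, x φ = χ φ} := by
      have hU2 : {x : L.Formula (ι ⊕ ι) → Bool | ∀ φ ∈ s, x φ = χ φ}
          = ⋂ φ ∈ s, (fun x : L.Formula (ι ⊕ ι) → Bool => x φ) ⁻¹' {χ φ} := by
        ext x; simp [Set.mem_iInter]
      rw [hU2]
      exact isOpen_biInter_finset fun φ _ =>
        (continuous_apply φ).isOpen_preimage _ (isOpen_discrete _)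
    obtain ⟨y, hy1, hy2⟩ := mem_closure_iff.mp hχ _ hU (fun φ _ => rfl)
    obtain ⟨P, rfl⟩ := hy2
    obtain ⟨g, hg⟩ := P.2
    refine ⟨g, fun φ hφ => ?_⟩
    rw [← hy1 φ hφ]
    exact (congrArg (fun t : Set (L.Formula (ι ⊕ ι)) => t.boolIndicator φ) hg.symm)
  set q : Set (L.Formula (ι ⊕ ι)) := {φ | χ φ = true} with hq
  have hconst : ∀ φ : L.Formula (ι ⊕ ι),
      (∀ g : Ge pE a, φ ∈ tpOver (L := L) prm (g • prm)) → φ ∈ q := by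
    intro φ hφ
    obtain ⟨g, hg⟩ := approx {φ}
    have hcc : χ φ = true :=
      (hg φ (Finset.mem_singleton_self φ)).trans ((Set.mem_iff_boolIndicator _ φ).mp (hφ g))
    exact hcc
  have hnot : ∀ φ : L.Formula (ι ⊕ ι), φ ∉ q → φ.not ∈ q := by
    intro φ hφ
    obtain ⟨g, hg⟩ := approx {φ, φ.not}
    have h1 := hg φ (by simp)
    have h2 := hg φ.not (by simp)
    have hnotin : φ ∉ tpOver (L := L) prm (g • prm) := by
      intro hin
      rw [(Set.mem_iff_boolIndicator _ φ).mp hin] at h1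
      exact hφ h1
    have hrealize : φ.not.Realize (Sum.elim (g • prm) prm) :=
      Language.Formula.realize_not.mpr hnotin
    have hmem2 : φ.not ∈ tpOver (L := L) prm (g • prm) := hrealize
    rw [(Set.mem_iff_boolIndicator _ _).mp hmem2] at h2
    exact h2
  have hsat : ∃ v, v ∈ SolSet q prm := by
    apply hM.2.2 ι ι prm q hι hι
    intro s hs
    obtain ⟨g, hg⟩ := approx s
    refine ⟨g • prm, fun φ hφ => ?_⟩
    have h1 := hg φ hφ
    have hcc : χ φ = true := hs hφ
    rw [hcc] at h1
    exact mem_tpOver.mp ((Set.mem_iff_boolIndicator _ φ).mpr h1.symm)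
  obtain ⟨v, hv⟩ := hsat
  have hsame : SameTp (L := L) prm v := by
    intro ψ
    by_cases hψ : ψ.Realize prm
    · have hin : (ψ.relabel Sum.inl) ∈ q := by
        apply hconst
        intro g
        show (ψ.relabel Sum.inl).Realize (Sum.elim (g • prm) prm)
        rw [Language.Formula.realize_relabel]
        show ψ.Realize ((g : M ≃[L] M) ∘ prm)
        exact (Language.StrongHomClass.realize_formula (g : M ≃[L] M) ψ).mpr hψ
      have hvs := hv _ hin
      rw [Language.Formula.realize_relabel] at hvs
      exact iff_of_true hψ hvs
    · have hin : (ψ.not.relabel Sum.inl) ∈ q := by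
        apply hconst
        intro g
        show (ψ.not.relabel Sum.inl).Realize (Sum.elim (g • prm) prm)
        rw [Language.Formula.realize_relabel]
        show ψ.not.Realize ((g : M ≃[L] M) ∘ prm)
        refine Language.Formula.realize_not.mpr fun hcon => hψ ?_
        exact (Language.StrongHomClass.realize_formula (g : M ≃[L] M) ψ).mp hcon
      have hvs := hv _ hin
      rw [Language.Formula.realize_relabel] at hvs
      have hvs2 : ¬ ψ.Realize (Sum.elim v prm ∘ Sum.inl) := Language.Formula.realize_not.mp hvs
      exact iff_of_false hψ hvs2
  obtain ⟨f, hf⟩ := hM.2.1 ι prm v hι hsame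
  have hfa : Frel (M := M) pE a (fun t => f (a t)) := by
    intro φ hφ
    set m : γ ⊕ γ → ι ⊕ ι := Sum.elim (fun t => Sum.inr (jγ t)) (fun t => Sum.inl (jγ t)) with hm
    have hin : (φ.relabel m) ∈ q := by
      apply hconst
      intro g
      show (φ.relabel m).Realize (Sum.elim (g • prm) prm)
      rw [Language.Formula.realize_relabel]
      have hcomp : (Sum.elim (g • prm) prm) ∘ m
          = Sum.elim a (fun t => (g : M ≃[L] M) (a t)) := by
        funext x
        cases x with
        | inl t =>
          show prm (jγ t) = a t
          exact congrFun hjγ t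
        | inr t =>
          show (g • prm) (jγ t) = (g : M ≃[L] M) (a t)
          rw [ge_smul_apply]
          exact congrArg _ (congrFun hjγ t)
      rw [hcomp]
      have hga : (fun t => (g : M ≃[L] M) (a t)) ∈ Fclass pE a := by
        have hstab : (g : M ≃[L] M) • Fclass pE a = Fclass pE a :=
          MulAction.mem_stabilizer_iff.mp g.2
        rw [← hstab]
        exact Set.mem_smul_set.mpr ⟨a, hE.refl a, rfl⟩
      exact hga φ hφ
    have hval := hv _ hin
    rw [Language.Formula.realize_relabel] at hval
    have hcomp : (Sum.elim v prm) ∘ m = Sum.elim a (fun t => f (a t)) := by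
      funext x
      cases x with
      | inl t =>
        show prm (jγ t) = a t
        exact congrFun hjγ t
      | inr t =>
        show v (jγ t) = f (a t)
        rw [← hf (jγ t)]
        exact congrArg f (congrFun hjγ t)
    rw [hcomp] at hval
    exact hval
  have hmemf : f ∈ AutE pE a := by
    refine MulAction.mem_stabilizer_iff.mpr ?_
    rw [aut_smul_Fclass]
    ext y
    constructor
    · intro hy
      exact hE.trans hfa hy
    · intro hy
      exact hE.trans (hE.symm hfa) hy
  have hfprm : (⟨f, hmemf⟩ : Ge pE a) • prm = v := funext fun i => hf i
  have htq : tpOver (L := L) prm v = q := by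
    ext φ
    constructor
    · intro hin
      by_contra hout
      have h2 := hnot φ hout
      exact (Language.Formula.realize_not.mp (hv _ h2)) hin
    · intro hqm
      exact hv φ hqm
  refine ⟨⟨q, ⟨⟨f, hmemf⟩, ?_⟩⟩, ?_⟩
  · show tpOver (L := L) prm ((⟨f, hmemf⟩ : Ge pE a) • prm) = q
    rw [hfprm]
    exact htq
  funext φ
  show (q).boolIndicator φ = χ φ
  cases hcc : χ φ with
  | true => exact (Set.mem_iff_boolIndicator q φ).mp hcc
  | false =>
    refine (Set.notMem_iff_boolIndicator q φ).mp ?_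
    intro hmem
    have hmm : χ φ = true := hmem
    rw [hcc] at hmm
    exact Bool.noConfusion hmm

theorem compactSpace_master (hM : IsMonster κ L M)
    (hE : Equivalence (Frel (M := M) pE)) {ι : Type u} {prm : ι → M}
    (hι : #ι < κ) (jγ : γ → ι) (hjγ : prm ∘ jγ = a) :
    @CompactSpace ↥(Set.range fun g : Ge pE a => tpOver (L := L) prm (g • prm))
      (typeSetTop _) := by
  letI := typeSetTop (Set.range fun g : Ge pE a => tpOver (L := L) prm (g • prm))
  constructor
  rw [(isInducing_eps _).isCompact_iff, Set.image_univ]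
  exact (isClosed_range_eps_master κ pE a hM hE hι jγ hjγ).isCompact

/-! ### The master type space and the transfer lemmas -/

variable (N : L.ElementarySubstructure M) {ιb : Type u} (b : ιb → SolT pS bp)

/-- The parameter tuple enumerating `N`, `b` and `a` together. -/
def masterPrm : (↥N ⊕ ((ιb × V) ⊕ γ)) → M :=
  Sum.elim (fun n => (n : M)) (Sum.elim (flat b) a)

theorem masterPrm_small (hκ : ℵ₀ < κ) (hγ : #γ < κ) (hV : #V < κ) (hN : #N < κ)
    (hιb : #ιb < κ) : #(↥N ⊕ ((ιb × V) ⊕ γ)) < κ :=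
  sum_lt_kappa κ hκ hN (sum_lt_kappa κ hκ (prod_lt_kappa κ hκ hιb hV) hγ)

theorem transfer_closed_preimage (hM : IsMonster κ L M) (hγ : #γ < κ)
    (hE : Equivalence (Frel (M := M) pE)) (hV : #V < κ)
    (hInv : SolInv pE a pS bp)
    (hb : IsLascarTuple κ pE a hInv b) (hbdcl : eInDclTuple pE a (flat b))
    (hN : #N < κ)
    (hNdcl : ∀ g : M ≃[L] M, (∀ x ∈ N, g x = x) → g ∈ AutE pE a)
    {D : Set (GalL κ pE a hInv)}
    (hD : @IsClosed _ (typeSetTop (Sb pE a b)) (nub κ pE a hInv b ⁻¹' D)) :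
    @IsClosed _ (typeSetTop (SMod pE a N)) (nuT κ pE a N ⁻¹' (xiL κ pE a hInv ⁻¹' D)) := by
  set prm₀ := masterPrm a N b with hprm₀
  have hjN : prm₀ ∘ Sum.inl = (Subtype.val : ↥N → M) := rfl
  have hjb : prm₀ ∘ (fun p : ιb × V => Sum.inr (Sum.inl p)) = flat b := rfl
  set rN := rmap pE a prm₀ (Subtype.val : ↥N → M) Sum.inl hjN with hrN
  set rb := rmap pE a prm₀ (flat b) (fun p : ιb × V => Sum.inr (Sum.inl p)) hjb with hrb
  have key : nuT κ pE a N ⁻¹' (xiL κ pE a hInv ⁻¹' D)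
      = rN '' (rb ⁻¹' (nub κ pE a hInv b ⁻¹' D)) := by
    ext p
    constructor
    · intro hp
      obtain ⟨f, hf⟩ := p.2
      set P : ↥(Set.range fun g : Ge pE a => tpOver (L := L) prm₀ (g • prm₀)) :=
        ⟨tpOver (L := L) prm₀ (f • prm₀), ⟨f, rfl⟩⟩ with hP
      have hrbP : (rb P : Set _) = tpOver (L := L) (flat b) (f • flat b) :=
        rmap_val pE a prm₀ (flat b) _ hjb P f rfl
      have hrNP : (rN P : Set _) = tpOver (L := L) (Subtype.val : ↥N → M)
          (f • (Subtype.val : ↥N → M)) :=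
        rmap_val pE a prm₀ (Subtype.val : ↥N → M) Sum.inl hjN P f rfl
      refine ⟨P, ?_, ?_⟩
      · show nub κ pE a hInv b (rb P) ∈ D
        rw [nub_eq κ pE a hM hV hInv b hb hbdcl (rb P) f hrbP]
        have hnuT : nuT κ pE a N p = projT κ pE a f :=
          nuT_eq κ pE a hM N hN hNdcl p f hf.symm
        have := hp
        rw [Set.mem_preimage, Set.mem_preimage, hnuT, xiL_projT κ pE a hInv f] at this
        exact this
      · refine Subtype.ext ?_
        rw [hrNP]
        exact hf
    · rintro ⟨P, hP, rfl⟩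
      obtain ⟨f, hf⟩ := P.2
      have hrbP : (rb P : Set _) = tpOver (L := L) (flat b) (f • flat b) :=
        rmap_val pE a prm₀ (flat b) _ hjb P f hf.symm
      have hrNP : (rN P : Set _) = tpOver (L := L) (Subtype.val : ↥N → M)
          (f • (Subtype.val : ↥N → M)) :=
        rmap_val pE a prm₀ (Subtype.val : ↥N → M) Sum.inl hjN P f hf.symm
      have hnub : nub κ pE a hInv b (rb P) = projS κ pE a hInv f :=
        nub_eq κ pE a hM hV hInv b hb hbdcl (rb P) f hrbP
      have hnuT : nuT κ pE a N (rN P) = projT κ pE a f :=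
        nuT_eq κ pE a hM N hN hNdcl (rN P) f hrNP
      show nuT κ pE a N (rN P) ∈ xiL κ pE a hInv ⁻¹' D
      rw [Set.mem_preimage, hnuT, xiL_projT κ pE a hInv f]
      have := hP
      change nub κ pE a hInv b (rb P) ∈ D at this
      rw [hnub] at this
      exact this
  rw [key]
  letI t0 := typeSetTop (Set.range fun g : Ge pE a => tpOver (L := L) prm₀ (g • prm₀))
  letI t1 := typeSetTop (SMod pE a N)
  letI t2 := typeSetTop (Sb pE a b)
  haveI hcomp : @CompactSpace _ t0 :=
    compactSpace_master κ pE a hM hE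
      (masterPrm_small κ N hM.1 hγ hV hN hb.1)
      (fun t => Sum.inr (Sum.inr t)) rfl
  haveI ht2 : @T2Space _ t1 := t2_typeSetTop _
  have hc1 : @Continuous _ _ t0 t1 rN := rmap_cont pE a prm₀ (Subtype.val : ↥N → M) Sum.inl hjN
  have hc2 : @Continuous _ _ t0 t2 rb :=
    rmap_cont pE a prm₀ (flat b) (fun p : ιb × V => Sum.inr (Sum.inl p)) hjb
  exact ((hD.preimage hc2).isCompact.image hc1).isClosed

theorem transfer_closed_image (hM : IsMonster κ L M) (hγ : #γ < κ)
    (hE : Equivalence (Frel (M := M) pE)) (hV : #V < κ)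
    (hInv : SolInv pE a pS bp)
    (hb : IsLascarTuple κ pE a hInv b) (hbdcl : eInDclTuple pE a (flat b))
    (hN : #N < κ)
    (hNdcl : ∀ g : M ≃[L] M, (∀ x ∈ N, g x = x) → g ∈ AutE pE a)
    {C : Set (GalT κ pE a)}
    (hC : @IsClosed _ (typeSetTop (SMod pE a N)) (nuT κ pE a N ⁻¹' C)) :
    @IsClosed _ (typeSetTop (Sb pE a b)) (nub κ pE a hInv b ⁻¹' (xiL κ pE a hInv '' C)) := by
  set prm₀ := masterPrm a N b with hprm₀
  have hjN : prm₀ ∘ Sum.inl = (Subtype.val : ↥N → M) := rfl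
  have hjb : prm₀ ∘ (fun p : ιb × V => Sum.inr (Sum.inl p)) = flat b := rfl
  set rN := rmap pE a prm₀ (Subtype.val : ↥N → M) Sum.inl hjN with hrN
  set rb := rmap pE a prm₀ (flat b) (fun p : ιb × V => Sum.inr (Sum.inl p)) hjb with hrb
  have key : nub κ pE a hInv b ⁻¹' (xiL κ pE a hInv '' C)
      = rb '' (rN ⁻¹' (nuT κ pE a N ⁻¹' C)) := by
    ext q
    constructor
    · intro hq
      obtain ⟨f, hf⟩ := q.2
      have hnub : nub κ pE a hInv b q = projS κ pE a hInv f :=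
        nub_eq κ pE a hM hV hInv b hb hbdcl q f hf.symm
      rw [Set.mem_preimage, hnub] at hq
      obtain ⟨y, hyC, hy⟩ := hq
      obtain ⟨h, hh⟩ := QuotientGroup.mk_surjective y
      have hxiy : projS κ pE a hInv h = projS κ pE a hInv f := by
        rw [← xiL_projT κ pE a hInv h]
        show xiL κ pE a hInv (projT κ pE a h) = _
        rw [show projT κ pE a h = y from hh, hy]
      have hρ : (toGS pE a hInv h)⁻¹ * toGS pE a hInv f ∈ AutfLS κ pE a hInv :=
        QuotientGroup.eq.mp hxiy
      obtain ⟨u, huL, hub⟩ :=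
        (mem_AutfLS_iff κ pE a hInv).mp hρ ιb hb.1 b
      set f₂ := h * u with hf₂
      have hf₂b : f₂ • flat b = f • flat b := by
        calc (h * u) • flat b = h • (u • flat b) := mul_smul h u (flat b)
          _ = h • flat (((toGS pE a hInv h)⁻¹ * toGS pE a hInv f) • b) := by rw [hub]
          _ = flat ((toGS pE a hInv h) • (((toGS pE a hInv h)⁻¹ * toGS pE a hInv f) • b)) :=
              (flat_toGS_smul pE a hInv h _).symm
          _ = flat (((toGS pE a hInv h) * ((toGS pE a hInv h)⁻¹ * toGS pE a hInv f)) • b) :=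
              congrArg flat (mul_smul _ _ _).symm
          _ = flat ((toGS pE a hInv f) • b) := by rw [mul_inv_cancel_left]
          _ = f • flat b := flat_toGS_smul pE a hInv f b
      set P : ↥(Set.range fun g : Ge pE a => tpOver (L := L) prm₀ (g • prm₀)) :=
        ⟨tpOver (L := L) prm₀ (f₂ • prm₀), ⟨f₂, rfl⟩⟩ with hP
      have hrbP : (rb P : Set _) = tpOver (L := L) (flat b) (f₂ • flat b) :=
        rmap_val pE a prm₀ (flat b) _ hjb P f₂ rfl
      have hrNP : (rN P : Set _) = tpOver (L := L) (Subtype.val : ↥N → M)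
          (f₂ • (Subtype.val : ↥N → M)) :=
        rmap_val pE a prm₀ (Subtype.val : ↥N → M) Sum.inl hjN P f₂ rfl
      refine ⟨P, ?_, ?_⟩
      · show nuT κ pE a N (rN P) ∈ C
        rw [nuT_eq κ pE a hM N hN hNdcl (rN P) f₂ hrNP]
        have : projT κ pE a f₂ = projT κ pE a h := QuotientGroup.mk_mul_of_mem h huL
        rw [this, show projT κ pE a h = y from hh]
        exact hyC
      · refine Subtype.ext ?_
        rw [hrbP, hf₂b]
        exact hf
    · rintro ⟨P, hP, rfl⟩
      obtain ⟨f, hf⟩ := P.2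
      have hrbP : (rb P : Set _) = tpOver (L := L) (flat b) (f • flat b) :=
        rmap_val pE a prm₀ (flat b) _ hjb P f hf.symm
      have hrNP : (rN P : Set _) = tpOver (L := L) (Subtype.val : ↥N → M)
          (f • (Subtype.val : ↥N → M)) :=
        rmap_val pE a prm₀ (Subtype.val : ↥N → M) Sum.inl hjN P f hf.symm
      have hnub : nub κ pE a hInv b (rb P) = projS κ pE a hInv f :=
        nub_eq κ pE a hM hV hInv b hb hbdcl (rb P) f hrbP
      have hnuT : nuT κ pE a N (rN P) = projT κ pE a f :=
        nuT_eq κ pE a hM N hN hNdcl (rN P) f hrNP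
      show nub κ pE a hInv b (rb P) ∈ xiL κ pE a hInv '' C
      rw [hnub]
      refine ⟨projT κ pE a f, ?_, (xiL_projT κ pE a hInv f)⟩
      have := hP
      change nuT κ pE a N (rN P) ∈ C at this
      rw [hnuT] at this
      exact this
  rw [key]
  letI t0 := typeSetTop (Set.range fun g : Ge pE a => tpOver (L := L) prm₀ (g • prm₀))
  letI t1 := typeSetTop (SMod pE a N)
  letI t2 := typeSetTop (Sb pE a b)
  haveI hcomp : @CompactSpace _ t0 :=
    compactSpace_master κ pE a hM hE
      (masterPrm_small κ N hM.1 hγ hV hN hb.1)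
      (fun t => Sum.inr (Sum.inr t)) rfl
  haveI ht2 : @T2Space _ t2 := t2_typeSetTop _
  have hc1 : @Continuous _ _ t0 t1 rN := rmap_cont pE a prm₀ (Subtype.val : ↥N → M) Sum.inl hjN
  have hc2 : @Continuous _ _ t0 t2 rb :=
    rmap_cont pE a prm₀ (flat b) (fun p : ιb × V => Sum.inr (Sum.inl p)) hjb
  exact ((hC.preimage hc1).isCompact.image hc2).isClosed

theorem xiL_preimage_closed (hM : IsMonster κ L M) (hγ : #γ < κ)
    (hE : Equivalence (Frel (M := M) pE)) (hV : #V < κ)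
    (hInv : SolInv pE a pS bp)
    (hb : IsLascarTuple κ pE a hInv b) (hbdcl : eInDclTuple pE a (flat b))
    (hN : #N < κ)
    (hNdcl : ∀ g : M ≃[L] M, (∀ x ∈ N, g x = x) → g ∈ AutE pE a)
    {D : Set (GalL κ pE a hInv)}
    (hD : @IsClosed _ (galTopb κ pE a hInv b) D) :
    @IsClosed _ (galTopT κ pE a N) (xiL κ pE a hInv ⁻¹' D) := by
  refine (@isClosed_coinduced _ _ (typeSetTop (SMod pE a N)) _ (nuT κ pE a N)).mpr ?_
  exact transfer_closed_preimage κ pE a N b hM hγ hE hV hInv hb hbdcl hN hNdcl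
    ((@isClosed_coinduced _ _ (typeSetTop (Sb pE a b)) _ (nub κ pE a hInv b)).mp hD)

theorem xiL_image_closed (hM : IsMonster κ L M) (hγ : #γ < κ)
    (hE : Equivalence (Frel (M := M) pE)) (hV : #V < κ)
    (hInv : SolInv pE a pS bp)
    (hb : IsLascarTuple κ pE a hInv b) (hbdcl : eInDclTuple pE a (flat b))
    (hN : #N < κ)
    (hNdcl : ∀ g : M ≃[L] M, (∀ x ∈ N, g x = x) → g ∈ AutE pE a)
    {C : Set (GalT κ pE a)}
    (hC : @IsClosed _ (galTopT κ pE a N) C) :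
    @IsClosed _ (galTopb κ pE a hInv b) (xiL κ pE a hInv '' C) := by
  refine (@isClosed_coinduced _ _ (typeSetTop (Sb pE a b)) _ (nub κ pE a hInv b)).mpr ?_
  exact transfer_closed_image κ pE a N b hM hγ hE hV hInv hb hbdcl hN hNdcl
    ((@isClosed_coinduced _ _ (typeSetTop (SMod pE a N)) _ (nuT κ pE a N)).mp hC)

end Aux


section Statements

variable {γ : Type u} (pE : Set (L.Formula (γ ⊕ γ))) (a : γ → M)
variable {V β : Type u} {pS : Set (L.Formula (V ⊕ β))} {bp : β → M}


/-- Proposition 2.17(1): for `H = π_b⁻¹[Gal_L^c(Σ, e)]` and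
tuples `c`, `d` of realizations of `Σ`, `c ≡ᴴ d` iff `c ≡ᴷᴾ_e d`. -/
theorem orbEq_closure_iff_KPeq (hM : IsMonster κ L M) (hγ : #γ < κ)
    (hE : Equivalence (Frel (M := M) pE)) (hV : #V < κ) (hβ : #β < κ)
    (hInv : SolInv pE a pS bp)
    (hedcl : eInDclSigma κ pE a pS bp)
    {ιb : Type u} (b : ιb → SolT pS bp)
    (hb : IsLascarTuple κ pE a hInv b) (hbdcl : eInDclTuple pE a (flat b))
    (N : L.ElementarySubstructure M) (hN : #N < κ)
    (hNdcl : ∀ g : M ≃[L] M, (∀ x ∈ N, g x = x) → g ∈ AutE pE a)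
    {ι : Type u} (hι : #ι < κ) (c d : ι → SolT pS bp) :
    orbEq (hInv := hInv) pE a
        (projb κ pE a hInv ⁻¹'
          (@closure _ (galTopb κ pE a hInv b) {projb κ pE a hInv 1})) c d ↔
      KPeq κ pE a N (flat c) (flat d) := by
  constructor
  · rintro ⟨σ, hσH, hσc⟩
    have hsub : (@closure _ (galTopb κ pE a hInv b) {projb κ pE a hInv 1})
        ⊆ xiL κ pE a hInv '' (@closure _ (galTopT κ pE a N) {projT κ pE a 1}) := by
      refine @closure_minimal _ (galTopb κ pE a hInv b) _ _ ?_ ?_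
      · intro x hx
        rw [Set.mem_singleton_iff] at hx
        subst hx
        refine ⟨projT κ pE a 1, @subset_closure _ (galTopT κ pE a N) {projT κ pE a 1} _ rfl, ?_⟩
        rw [xiL_projT κ pE a hInv 1]
        show projb κ pE a hInv (toGS pE a hInv 1) = projb κ pE a hInv 1
        rw [map_one]
      · exact xiL_image_closed κ pE a N b hM hγ hE hV hInv hb hbdcl hN hNdcl
          (@isClosed_closure _ (galTopT κ pE a N) {projT κ pE a 1})
    obtain ⟨y, hyC, hy⟩ := hsub hσH
    obtain ⟨h, hh⟩ := QuotientGroup.mk_surjective y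
    have hxiy : projS κ pE a hInv h = projb κ pE a hInv σ := by
      rw [← xiL_projT κ pE a hInv h, show projT κ pE a h = y from hh]
      exact hy
    have hρ : (toGS pE a hInv h)⁻¹ * σ ∈ AutfLS κ pE a hInv := QuotientGroup.eq.mp hxiy
    obtain ⟨u, huL, huc⟩ := (mem_AutfLS_iff κ pE a hInv).mp hρ ι hι c
    refine ⟨h * u, ?_, ?_⟩
    · show projT κ pE a (h * u) ∈ @closure _ (galTopT κ pE a N) {projT κ pE a 1}
      have hmul : projT κ pE a (h * u) = projT κ pE a h := QuotientGroup.mk_mul_of_mem h huL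
      rw [hmul, show projT κ pE a h = y from hh]
      exact hyC
    · calc (h * u) • flat c = h • (u • flat c) := mul_smul h u (flat c)
        _ = h • flat (((toGS pE a hInv h)⁻¹ * σ) • c) := by rw [huc]
        _ = flat ((toGS pE a hInv h) • (((toGS pE a hInv h)⁻¹ * σ) • c)) :=
            (flat_toGS_smul pE a hInv h _).symm
        _ = flat (((toGS pE a hInv h) * ((toGS pE a hInv h)⁻¹ * σ)) • c) :=
            congrArg flat (mul_smul _ _ _).symm
        _ = flat (σ • c) := by rw [mul_inv_cancel_left]
        _ = flat d := by rw [hσc]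
  · rintro ⟨f, hfKP, hfc⟩
    refine ⟨toGS pE a hInv f, ?_, ?_⟩
    · show projb κ pE a hInv (toGS pE a hInv f) ∈ @closure _ (galTopb κ pE a hInv b) {projb κ pE a hInv 1}
      have hsub : (@closure _ (galTopT κ pE a N) {projT κ pE a 1})
          ⊆ xiL κ pE a hInv ⁻¹' (@closure _ (galTopb κ pE a hInv b) {projb κ pE a hInv 1}) := by
        refine @closure_minimal _ (galTopT κ pE a N) _ _ ?_ ?_
        · intro x hx
          rw [Set.mem_singleton_iff] at hx
          subst hx
          show xiL κ pE a hInv (projT κ pE a 1) ∈ @closure _ (galTopb κ pE a hInv b) {projb κ pE a hInv 1}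
          rw [xiL_projT κ pE a hInv 1]
          have h1 : projS κ pE a hInv 1 = projb κ pE a hInv 1 :=
            congrArg (projb κ pE a hInv) (map_one _)
          rw [h1]
          exact @subset_closure _ (galTopb κ pE a hInv b) {projb κ pE a hInv 1} _ rfl
        · exact xiL_preimage_closed κ pE a N b hM hγ hE hV hInv hb hbdcl hN hNdcl
            (@isClosed_closure _ (galTopb κ pE a hInv b) {projb κ pE a hInv 1})
      have hmem := hsub hfKP
      rw [Set.mem_preimage, xiL_projT κ pE a hInv f] at hmem
      exact hmem
    · apply flat_inj
      rw [flat_toGS_smul pE a hInv f c, hfc]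


end Statements

end RelLascar
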